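/- arXiv:math/0208176 — 4 statements merged into one kernel-verified Lean document; each statement's English description precedes it below -/
import Mathlib

section
/- If G is a finite group that is not cyclic of prime power order, then the coset poset C(G) (proper cosets of G ordered by inclusion) is connected; that is, the order complex of C(G) is a connected graph under the relation of comparability. -/
open scoped Pointwise

/-- The coset poset of `G`: the collection of all left cosets of all proper
subgroups of `G` (cosets of the trivial subgroup allowed, `G` itself excluded). -/
def cosetPoset (G : Type*) [Group G] : Set (Set G) :=
  {s | ∃ (x : G) (H : Subgroup G), H ≠ ⊤ ∧ s = x • (H : Set G)}

section Aux

variable {G : Type*} [Group G]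

lemma coset_mem_cosetPoset (x : G) {H : Subgroup G} (hH : H ≠ ⊤) :
    x • (H : Set G) ∈ cosetPoset G := ⟨x, H, hH, rfl⟩

lemma singleton_mem_cosetPoset [Nontrivial G] (x : G) :
    ({x} : Set G) ∈ cosetPoset G :=
  ⟨x, ⊥, bot_ne_top, by simp⟩

lemma singleton_subset_coset {x a : G} {H : Subgroup G} (hmem : x⁻¹ * a ∈ H) :
    ({a} : Set G) ⊆ x • (H : Set G) := by
  rw [Set.singleton_subset_iff, Set.mem_smul_set_iff_inv_smul_mem]
  simpa using hmem

lemma zpowers_pow_ne_top [Finite G] {g : G} (hg : orderOf g = Nat.card G)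
    {p : ℕ} (hp : p.Prime) (hd : p ∣ Nat.card G) :
    Subgroup.zpowers (g ^ p) ≠ ⊤ := by
  intro htop
  have hcard : orderOf (g ^ p) = Nat.card G := by
    rw [← Nat.card_zpowers, htop]
    exact Nat.card_congr (Equiv.Set.univ G).symm |>.symm ▸ rfl
  have h2 : orderOf (g ^ p) = Nat.card G / p := by
    rw [orderOf_pow, hg, Nat.gcd_eq_right hd]
  have hn : 0 < Nat.card G := Nat.card_pos
  rw [h2] at hcard
  have := Nat.div_lt_self hn hp.one_lt
  omega

lemma exists_two_primes {n : ℕ} (h2 : 2 ≤ n) (h : ¬ IsPrimePow n) :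
    ∃ p q : ℕ, p.Prime ∧ q.Prime ∧ p ≠ q ∧ p ∣ n ∧ q ∣ n := by
  set p := n.minFac with hp
  have hpp : p.Prime := Nat.minFac_prime (by omega)
  set m := n / p ^ n.factorization p with hm
  have hmn : p ^ n.factorization p * m = n := Nat.ordProj_mul_ordCompl_eq_self n p
  have hpm : ¬ p ∣ m := Nat.not_dvd_ordCompl hpp (by omega)
  have hm1 : m ≠ 1 := by
    intro h1
    apply h
    rw [h1, mul_one] at hmn
    exact ⟨p, n.factorization p, hpp.prime, by
      have : n.factorization p ≠ 0 := by
        intro h0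
        rw [h0, pow_zero] at hmn
        omega
      omega, hmn⟩
  have hm0 : m ≠ 0 := by
    intro h0
    rw [h0, mul_zero] at hmn
    omega
  have hq : m.minFac.Prime := Nat.minFac_prime hm1
  refine ⟨p, m.minFac, hpp, hq, ?_, n.minFac_dvd, ?_⟩
  · intro he
    exact hpm (he ▸ m.minFac_dvd)
  · exact dvd_trans m.minFac_dvd (Dvd.intro_left _ hmn)

lemma key [Finite G] [Nontrivial G]
    (h : ¬ (IsCyclic G ∧ IsPrimePow (Nat.card G))) (x y : G) :
    Relation.ReflTransGen
      (fun A B : cosetPoset G => (A : Set G) ⊆ B ∨ (B : Set G) ⊆ A)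
      ⟨{x}, singleton_mem_cosetPoset x⟩ ⟨{y}, singleton_mem_cosetPoset y⟩ := by
  set g := x⁻¹ * y with hgdef
  by_cases hg : Subgroup.zpowers g = ⊤
  · -- G is cyclic generated by g
    have hcyc : IsCyclic G := ⟨⟨g, fun a => by
      have ha : a ∈ (⊤ : Subgroup G) := trivial
      rwa [← hg] at ha⟩⟩
    have hnpp : ¬ IsPrimePow (Nat.card G) := fun hpp => h ⟨hcyc, hpp⟩
    have hord : orderOf g = Nat.card G := by
      rw [← Nat.card_zpowers, hg]
      exact Nat.card_congr (Subgroup.topEquiv.toEquiv)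
    have hn2 : 2 ≤ Nat.card G := Finite.one_lt_card_iff_nontrivial.mpr ‹Nontrivial G›
    obtain ⟨p, q, hp, hq, hpq, hpd, hqd⟩ := exists_two_primes hn2 hnpp
    have hco : IsCoprime (p : ℤ) (q : ℤ) := by
      rw [Int.isCoprime_iff_gcd_eq_one]
      exact_mod_cast (Nat.coprime_primes hp hq).mpr hpq
    obtain ⟨u, v, huv⟩ := hco
    set h₀ : G := (g ^ q) ^ v with hh₀
    have hmem1 : h₀ ∈ Subgroup.zpowers (g ^ q) :=
      Subgroup.zpow_mem _ (Subgroup.mem_zpowers _) v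
    have hmem2 : g⁻¹ * h₀ ∈ Subgroup.zpowers (g ^ p) := by
      have : g⁻¹ * h₀ = (g ^ p) ^ (-u) := by
        rw [hh₀, ← zpow_natCast g q, ← zpow_natCast g p, ← zpow_mul, ← zpow_mul,
          ← zpow_neg_one, ← zpow_add]
        congr 1
        linear_combination huv
      rw [this]
      exact Subgroup.zpow_mem _ (Subgroup.mem_zpowers _) _
    have hQtop := zpowers_pow_ne_top hord hq hqd
    have hPtop := zpowers_pow_ne_top hord hp hpd
    -- chain: {x} ⊆ x•⟨g^q⟩ ⊇ {x*h₀} ⊆ (x*g)•⟨g^p⟩ ⊇ {y}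
    have s1 : ({x} : Set G) ⊆ x • (Subgroup.zpowers (g ^ q) : Set G) :=
      singleton_subset_coset (by rw [inv_mul_cancel]; exact Subgroup.one_mem _)
    have s2 : ({x * h₀} : Set G) ⊆ x • (Subgroup.zpowers (g ^ q) : Set G) :=
      singleton_subset_coset (by rwa [← mul_assoc, inv_mul_cancel, one_mul])
    have s3 : ({x * h₀} : Set G) ⊆ (x * g) • (Subgroup.zpowers (g ^ p) : Set G) :=
      singleton_subset_coset (by
        have he : (x * g)⁻¹ * (x * h₀) = g⁻¹ * h₀ := by group
        rwa [he])
    have s4 : ({y} : Set G) ⊆ (x * g) • (Subgroup.zpowers (g ^ p) : Set G) :=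
      singleton_subset_coset (by
        have : x * g = y := by rw [hgdef, mul_inv_cancel_left]
        rw [this, inv_mul_cancel]; exact Subgroup.one_mem _)
    exact Relation.ReflTransGen.head (b := ⟨_, coset_mem_cosetPoset x hQtop⟩) (Or.inl s1)
      (Relation.ReflTransGen.head (b := ⟨_, singleton_mem_cosetPoset (x * h₀)⟩) (Or.inr s2)
        (Relation.ReflTransGen.head (b := ⟨_, coset_mem_cosetPoset (x * g) hPtop⟩) (Or.inl s3)
          (Relation.ReflTransGen.single (Or.inr s4))))
  · -- ⟨g⟩ is proper; go through x • ⟨g⟩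
    have s1 : ({x} : Set G) ⊆ x • (Subgroup.zpowers g : Set G) :=
      singleton_subset_coset (by rw [inv_mul_cancel]; exact Subgroup.one_mem _)
    have s2 : ({y} : Set G) ⊆ x • (Subgroup.zpowers g : Set G) :=
      singleton_subset_coset (Subgroup.mem_zpowers _)
    exact Relation.ReflTransGen.head (b := ⟨_, coset_mem_cosetPoset x hg⟩) (Or.inl s1)
      (Relation.ReflTransGen.single (Or.inr s2))

end Aux

/-- If `G` is a finite group that is not cyclic of prime power order, then the
coset poset `C(G)` is connected: any two proper cosets are joined by a chain of
proper cosets in which consecutive members are comparable under inclusion. -/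
theorem stmt_0 {G : Type*} [Group G] [Finite G]
    (h : ¬ (IsCyclic G ∧ IsPrimePow (Nat.card G)))
    (C₁ C₂ : cosetPoset G) :
    Relation.ReflTransGen
      (fun A B : cosetPoset G => (A : Set G) ⊆ B ∨ (B : Set G) ⊆ A) C₁ C₂ := by
  obtain ⟨s₁, x₁, H₁, hH₁, rfl⟩ := C₁
  obtain ⟨s₂, x₂, H₂, hH₂, rfl⟩ := C₂
  haveI : Nontrivial G := by
    by_contra hnt
    rw [not_nontrivial_iff_subsingleton] at hnt
    apply hH₁
    rw [Subgroup.eq_top_iff']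
    intro a
    rw [Subsingleton.elim a 1]
    exact H₁.one_mem
  have t1 : ({x₁} : Set G) ⊆ x₁ • (H₁ : Set G) := singleton_subset_coset (by rw [inv_mul_cancel]; exact Subgroup.one_mem _)
  have t2 : ({x₂} : Set G) ⊆ x₂ • (H₂ : Set G) := singleton_subset_coset (by rw [inv_mul_cancel]; exact Subgroup.one_mem _)
  exact Relation.ReflTransGen.head (b := ⟨_, singleton_mem_cosetPoset x₁⟩) (Or.inr t1)
    ((key h x₁ x₂).trans (Relation.ReflTransGen.single (Or.inl t2)))
end

section
/- If G is cyclic of prime power order p^n (n ≥ 1), then G has a unique maximal subgroup, and the coset poset C(G) has exactly p connected components. -/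
open scoped Pointwise

/-- If `G` is cyclic of prime power order `p ^ n` (`n ≥ 1`), then `G` has a
unique maximal (proper) subgroup, and the coset poset `C(G)` has exactly `p`
connected components (components being classes for the equivalence generated by
comparability under inclusion). -/
theorem stmt_1 {G : Type*} [Group G] [Finite G] (hG : IsCyclic G)
    (p n : ℕ) (hp : p.Prime) (hn : 1 ≤ n) (hcard : Nat.card G = p ^ n) :
    (∃! M : Subgroup G, IsCoatom M) ∧
      Nat.card (Quot
        (fun A B : cosetPoset G => (A : Set G) ⊆ B ∨ (B : Set G) ⊆ A)) = p := by
  obtain ⟨g, hg⟩ := hG.exists_generator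
  have hog : orderOf g = p ^ n := by
    rw [orderOf_eq_card_of_forall_mem_zpowers hg, hcard]
  set M : Subgroup G := Subgroup.zpowers (g ^ p) with hM
  have hcardM : Nat.card M = p ^ (n - 1) := by
    rw [hM, Nat.card_zpowers, orderOf_pow, hog]
    have : Nat.gcd (p ^ n) p = p := by
      rw [Nat.gcd_comm]
      exact Nat.gcd_eq_left (dvd_pow_self p (by omega))
    rw [this]
    simpa using Nat.pow_div hn hp.pos
  -- every proper subgroup is contained in M
  have hle : ∀ H : Subgroup G, H ≠ ⊤ → H ≤ M := by
    intro H hH x hx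
    obtain ⟨k, rfl⟩ := mem_powers_iff_mem_zpowers.mpr (hg x)
    rcases Nat.Prime.eq_one_or_self_of_dvd hp (Nat.gcd p k) (Nat.gcd_dvd_left p k) with h1 | h1
    · -- gcd p k = 1: g^k generates G, contradiction
      exfalso
      apply hH
      have hcop : Nat.Coprime (orderOf g) k := by
        rw [hog]
        exact (Nat.Coprime.pow_left n h1)
      have hord : orderOf (g ^ k) = p ^ n := by
        rw [Nat.Coprime.orderOf_pow hcop, hog]
      have : (p : ℕ) ^ n ∣ Nat.card H := by
        rw [← hord]
        have : orderOf (⟨g ^ k, hx⟩ : H) = orderOf (g ^ k) := Subgroup.orderOf_mk _ hx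
        rw [← this]
        exact orderOf_dvd_natCard _
      have hdvd : Nat.card H ∣ p ^ n := hcard ▸ Subgroup.card_subgroup_dvd_card H
      have hcardH : Nat.card H = p ^ n :=
        Nat.dvd_antisymm hdvd this
      exact Subgroup.eq_top_of_card_eq H (by rw [hcardH, hcard])
    · -- p ∣ k
      have hpk : p ∣ k := h1 ▸ Nat.gcd_dvd_right p k
      obtain ⟨m, rfl⟩ := hpk
      exact ⟨(m : ℤ), by simp only [zpow_natCast]; rw [← pow_mul]⟩
  have hMne : M ≠ ⊤ := by
    intro h
    have := hcardM
    rw [h, Subgroup.card_top, hcard] at this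
    have := Nat.pow_right_injective hp.two_le this
    omega
  have hcoatom : IsCoatom M := by
    constructor
    · exact hMne
    · intro H hH
      by_contra h
      exact absurd (hle H h) hH.not_ge
  have hindex : M.index = p := by
    have h := M.card_mul_index
    rw [hcardM, hcard] at h
    have hpn : p ^ n = p ^ (n - 1) * p := by
      rw [← pow_succ]; congr 1; omega
    rw [hpn] at h
    exact Nat.eq_of_mul_eq_mul_left (Nat.pos_of_ne_zero (pow_ne_zero _ hp.pos.ne')) h
  refine ⟨⟨M, hcoatom, ?_⟩, ?_⟩
  · intro M' hM'
    rcases eq_or_lt_of_le (hle M' hM'.1) with h | h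
    · exact h
    · exact absurd (hM'.2 M h) hMne
  -- second part: bijection with G ⧸ M
  · -- key: elements of a coset have the same image in G ⧸ M
    have key : ∀ A : Set G, A ∈ cosetPoset G → ∀ a ∈ A, ∀ b ∈ A,
        (QuotientGroup.mk a : G ⧸ M) = QuotientGroup.mk b := by
      rintro A ⟨x, H, hH, rfl⟩ a ha b hb
      obtain ⟨h1, hh1, rfl⟩ := ha
      obtain ⟨h2, hh2, rfl⟩ := hb
      rw [QuotientGroup.eq]
      simp only [smul_eq_mul, mul_inv_rev]
      have : h1⁻¹ * h2 ∈ H := H.mul_mem (H.inv_mem hh1) hh2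
      have := hle H hH this
      simpa [mul_assoc] using this
    have hne : ∀ A : cosetPoset G, (A : Set G).Nonempty := by
      rintro ⟨A, x, H, hH, rfl⟩
      exact ⟨x, 1, H.one_mem, mul_one x⟩
    classical
    set r := fun A B : cosetPoset G => (A : Set G) ⊆ B ∨ (B : Set G) ⊆ A with hr
    set f : cosetPoset G → G ⧸ M := fun A => QuotientGroup.mk (hne A).choose with hf
    have hfmem : ∀ A : cosetPoset G, (hne A).choose ∈ (A : Set G) := fun A => (hne A).choose_spec
    have hconst : ∀ A B : cosetPoset G, r A B → f A = f B := by
      rintro A B (hAB | hBA)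
      · exact key B B.2 _ (hAB (hfmem A)) _ (hfmem B)
      · exact key A A.2 _ (hfmem A) _ (hBA (hfmem B))
    set F : Quot r → G ⧸ M := Quot.lift f hconst with hF
    have hMcoset : ∀ y : G, (y • (M : Set G)) ∈ cosetPoset G := fun y => ⟨y, M, hMne, rfl⟩
    -- each A is contained in the M-coset of any of its elements
    have hsub : ∀ A : cosetPoset G, ∀ a ∈ (A : Set G), (A : Set G) ⊆ a • (M : Set G) := by
      rintro ⟨A, x, H, hH, rfl⟩ a ha b hb
      have hbM : b ∈ x • (M : Set G) := Set.smul_set_mono (hle H hH) hb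
      have haM : a ∈ x • (M : Set G) := Set.smul_set_mono (hle H hH) ha
      obtain ⟨m1, hm1, rfl⟩ := haM
      obtain ⟨m2, hm2, rfl⟩ := hbM
      exact ⟨m1⁻¹ * m2, M.mul_mem (M.inv_mem hm1) hm2, by simp [mul_assoc]⟩
    have hbij : Function.Bijective F := by
      constructor
      · intro q1 q2 h
        induction q1 using Quot.ind with | _ A =>
        induction q2 using Quot.ind with | _ B =>
        have h' : f A = f B := h
        set a := (hne A).choose
        set b := (hne B).choose
        have hab : (QuotientGroup.mk a : G ⧸ M) = QuotientGroup.mk b := h'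
        have habM : a • (M : Set G) = b • (M : Set G) := by
          rw [QuotientGroup.eq] at hab
          ext y
          constructor
          · rintro ⟨m, hm, rfl⟩
            exact ⟨b⁻¹ * a * m, M.mul_mem (by simpa using M.inv_mem hab) hm, by
              simp [smul_eq_mul, mul_assoc]⟩
          · rintro ⟨m, hm, rfl⟩
            exact ⟨a⁻¹ * b * m, M.mul_mem hab hm, by simp [smul_eq_mul, mul_assoc]⟩
        set C : cosetPoset G := ⟨a • (M : Set G), hMcoset a⟩
        have h1 : Quot.mk r A = Quot.mk r C :=
          Quot.sound (Or.inl (hsub A a (hfmem A)))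
        have h2 : Quot.mk r B = Quot.mk r C := by
          apply Quot.sound
          left
          have := hsub B b (hfmem B)
          rwa [← habM] at this
        rw [h1, h2]
      · intro y
        induction y using QuotientGroup.induction_on with | _ x =>
        refine ⟨Quot.mk r ⟨x • (M : Set G), hMcoset x⟩, ?_⟩
        have : F (Quot.mk r ⟨x • (M : Set G), hMcoset x⟩) = f ⟨x • (M : Set G), hMcoset x⟩ := rfl
        rw [this, hf]
        have hmem := hfmem ⟨x • (M : Set G), hMcoset x⟩
        obtain ⟨m, hm, heq⟩ := hmem
        simp only
        rw [← heq, QuotientGroup.eq]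
        simpa using M.inv_mem hm
    rw [Nat.card_eq_of_bijective F hbij, ← Subgroup.index_eq_card, hindex]
end

section
/- The conjugation action of A5 on its set of six Sylow 5-subgroups is 2-transitive. -/
section Aux

open MulAction Subgroup

local notation "A5" => alternatingGroup (Fin 5)

instance : Fact (Nat.Prime 5) := ⟨by norm_num⟩

lemma card_A5 : Nat.card A5 = 60 := by
  have h : 2 * Fintype.card A5 = Fintype.card (Equiv.Perm (Fin 5)) :=
    two_mul_card_alternatingGroup
  rw [Nat.card_eq_fintype_card]
  have hp : Fintype.card (Equiv.Perm (Fin 5)) = 120 := by simp [Fintype.card_perm]; rfl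
  omega

lemma card_sylow5 (P : Sylow 5 A5) : Nat.card P = 5 := by
  have h := Sylow.card_eq_multiplicity P
  rw [card_A5] at h
  have h1 : (5:ℕ)^1 ∣ 60 := by norm_num
  have h2 : ¬ (5:ℕ)^2 ∣ 60 := by norm_num
  rw [Nat.Prime.pow_dvd_iff_le_factorization (by norm_num) (by norm_num)] at h1 h2
  have : (Nat.factorization 60) 5 = 1 := by omega
  rw [this, pow_one] at h
  exact h

lemma sylow_le_eq {P Q : Sylow 5 A5} (h : (P : Subgroup A5) ≤ Q) : P = Q :=
  Sylow.ext (P.3 Q.2 h).symm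

lemma num_sylow5 : Nat.card (Sylow 5 A5) = 6 := by
  obtain ⟨P⟩ : Nonempty (Sylow 5 A5) := Sylow.nonempty
  have hdvd : Nat.card (Sylow 5 A5) ∣ (P : Subgroup A5).index := P.card_dvd_index
  have hindex : (P : Subgroup A5).index = 12 := by
    have := Subgroup.card_mul_index (P : Subgroup A5)
    rw [card_A5] at this
    have h5 : Nat.card (P : Subgroup A5) = 5 := card_sylow5 P
    rw [h5] at this
    omega
  rw [hindex] at hdvd
  have hmod : Nat.card (Sylow 5 A5) % 5 = 1 % 5 := card_sylow_modEq_one 5 A5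
  have hne : Nat.card (Sylow 5 A5) ≠ 1 := by
    intro h1
    have hsub : Subsingleton (Sylow 5 A5) := (Nat.card_eq_one_iff_unique.mp h1).1
    have hnorm : (P : Subgroup A5).Normal := by
      rw [← normalizer_eq_top_iff]
      rw [eq_top_iff']
      intro g
      refine Sylow.smul_eq_iff_mem_normalizer.mp ?_
      exact Subsingleton.elim _ _
    rcases hnorm.eq_bot_or_eq_top with hb | ht
    · have : Nat.card (P : Subgroup A5) = 1 := by rw [hb]; exact Subgroup.card_bot
      rw [card_sylow5 P] at this; omega
    · have : Nat.card (P : Subgroup A5) = 60 := by rw [ht, card_top, card_A5]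
      rw [card_sylow5 P] at this; omega
  have hle : Nat.card (Sylow 5 A5) ≤ 12 := Nat.le_of_dvd (by norm_num) hdvd
  interval_cases h : Nat.card (Sylow 5 A5) <;> simp_all <;> omega

/-- The normalizer of a Sylow 5-subgroup acts transitively on the other Sylow 5-subgroups. -/
lemma normalizer_trans (P Q R : Sylow 5 A5) (hQ : Q ≠ P) (hR : R ≠ P) :
    ∃ h : A5, h • P = P ∧ h • Q = R := by
  classical
  have : Fintype (Sylow 5 A5) := Fintype.ofFinite _
  set H : Subgroup A5 := (P : Subgroup A5) with hH
  -- the orbit of Q under H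
  have hfix : ∀ S : Sylow 5 A5, S ∈ fixedPoints H (Sylow 5 A5) → S = P := by
    intro S hS
    rw [P.2.sylow_mem_fixedPoints_iff] at hS
    exact (sylow_le_eq hS).symm
  have hsmulP : ∀ h : H, h • P = P := by
    intro h
    rw [Subgroup.smul_def, Sylow.smul_eq_iff_mem_normalizer]
    exact le_normalizer h.2
  have horbsub : orbit H Q ⊆ ({P} : Set (Sylow 5 A5))ᶜ := by
    rintro S ⟨h, rfl⟩
    simp only [Set.mem_compl_iff, Set.mem_singleton_iff]
    intro heq
    exact hQ (smul_left_cancel h (heq.trans (hsmulP h).symm))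
  -- cardinalities
  have hcardH : Nat.card H = 5 := card_sylow5 P
  have horbdvd : Nat.card (orbit H Q) ∣ 5 := by
    have := MulAction.card_orbit_mul_card_stabilizer_eq_card_group H Q
    rw [← Nat.card_eq_fintype_card, ← Nat.card_eq_fintype_card,
      ← Nat.card_eq_fintype_card, hcardH] at this
    exact ⟨_, this.symm⟩
  have horbne : Nat.card (orbit H Q) ≠ 1 := by
    intro h1
    have : Fintype (orbit H Q) := Fintype.ofFinite _
    rw [Nat.card_eq_fintype_card] at h1
    have := mem_fixedPoints_iff_card_orbit_eq_one.mpr h1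
    exact hQ (hfix Q this)
  have horb5 : Nat.card (orbit H Q) = 5 := by
    rcases (Nat.Prime.eq_one_or_self_of_dvd (by norm_num) _ horbdvd) with h | h
    · exact absurd h horbne
    · exact h
  have hcompl : (({P} : Set (Sylow 5 A5))ᶜ).ncard = 5 := by
    have h6 : Nat.card (Sylow 5 A5) = 6 := num_sylow5
    have := Set.ncard_add_ncard_compl ({P} : Set (Sylow 5 A5))
    rw [Set.ncard_singleton, h6] at this
    omega
  have horbcard : (orbit H Q).ncard = 5 := by
    rw [← Nat.card_coe_set_eq]
    exact horb5
  have heq : orbit H Q = ({P} : Set (Sylow 5 A5))ᶜ := by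
    apply Set.eq_of_subset_of_ncard_le horbsub _ (Set.toFinite _)
    rw [hcompl, horbcard]
  have hRmem : R ∈ orbit H Q := by
    rw [heq]
    simpa using hR
  obtain ⟨h, hh⟩ := hRmem
  exact ⟨(h : A5), hsmulP h, hh⟩

end Aux

/-- The conjugation action of `A₅` on its six Sylow 5-subgroups is 2-transitive. -/
theorem stmt_8 (P₁ Q₁ P₂ Q₂ : Sylow 5 (alternatingGroup (Fin 5)))
    (h₁ : P₁ ≠ Q₁) (h₂ : P₂ ≠ Q₂) :
    ∃ g : alternatingGroup (Fin 5), g • P₁ = P₂ ∧ g • Q₁ = Q₂ := by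
  obtain ⟨g, hg⟩ := MulAction.exists_smul_eq (alternatingGroup (Fin 5)) P₁ P₂
  have hQ' : g • Q₁ ≠ P₂ := by
    intro h
    exact h₁ (smul_left_cancel g (hg.trans h.symm))
  obtain ⟨h, hP, hQ⟩ := normalizer_trans P₂ (g • Q₁) Q₂ hQ' (Ne.symm h₂)
  refine ⟨h * g, ?_, ?_⟩
  · rw [mul_smul, hg, hP]
  · rw [mul_smul, hQ]
end

section
/- Let G be a finite group with a cyclic subgroup H such that any two distinct conjugates of H intersect trivially. Then for every nontrivial subgroup K ≤ H, the normalizer of K in G equals the normalizer of H in G. -/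
/-- In a finite cyclic group, subgroups of equal cardinality are equal. -/
lemma aux_cyclic_card_unique {α : Type*} [Group α] [Finite α] (h : IsCyclic α)
    {A B : Subgroup α} (hc : Nat.card A = Nat.card B) : A = B := by
  classical
  letI := Fintype.ofFinite α
  haveI := h
  have key : ∀ (C : Subgroup α), (C : Set α) = {x : α | x ^ Nat.card C = 1} := by
    intro C
    set n := Nat.card C with hn
    have hn0 : 0 < n := Nat.card_pos
    have hle : (C : Set α) ⊆ {x : α | x ^ n = 1} := by
      intro y hy
      have : (⟨y, hy⟩ : C) ^ n = 1 := by rw [hn]; exact pow_card_eq_one'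
      simpa using congrArg Subtype.val this
    have hfin : ({x : α | x ^ n = 1}).ncard ≤ n := by
      have hcardS : ({a : α | a ^ n = 1} : Finset α).card ≤ n :=
        IsCyclic.card_pow_eq_one_le (α := α) hn0
      rw [← Set.ncard_coe_finset ({a : α | a ^ n = 1} : Finset α)] at hcardS
      convert hcardS using 2
      ext y
      simp
    have hC : (Set.ncard (C : Set α)) = n := by rw [hn, ← Nat.card_coe_set_eq]; rfl
    exact Set.eq_of_subset_of_ncard_le hle (by rw [hC]; exact hfin) (Set.toFinite _)
  apply SetLike.coe_injective
  rw [key A, key B, hc]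

lemma aux_mem_normalizer_iff_map_conj {G : Type*} [Group G] (S : Subgroup G) (g : G) :
    g ∈ Subgroup.normalizer (S : Set G) ↔ S.map (MulAut.conj g).toMonoidHom = S := by
  rw [Subgroup.mem_normalizer_iff'']
  constructor
  · intro hg
    ext x
    rw [Subgroup.mem_map_equiv]
    exact (hg x).symm
  · intro hg x
    conv_lhs => rw [← hg]
    rw [Subgroup.mem_map_equiv]
    simp [MulAut.conj]

/-- If `G` is a finite group and `H ≤ G` is a cyclic subgroup any two distinct
conjugates of which intersect trivially, then every nontrivial subgroup `K ≤ H`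
has the same normalizer in `G` as `H`. -/
theorem stmt_19 {G : Type*} [Group G] [Finite G] (H : Subgroup G) (hH : IsCyclic H)
    (hTI : ∀ g₁ g₂ : G,
      H.map (MulAut.conj g₁).toMonoidHom ≠ H.map (MulAut.conj g₂).toMonoidHom →
        H.map (MulAut.conj g₁).toMonoidHom ⊓ H.map (MulAut.conj g₂).toMonoidHom = ⊥)
    (K : Subgroup G) (hKH : K ≤ H) (hK : K ≠ ⊥) :
    Subgroup.normalizer (K : Set G) = Subgroup.normalizer (H : Set G) := by
  have hmap1 : H.map (MulAut.conj (1 : G)).toMonoidHom = H := by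
    ext x; rw [Subgroup.mem_map_equiv]; simp [MulAut.conj]
  ext g
  rw [aux_mem_normalizer_iff_map_conj, aux_mem_normalizer_iff_map_conj]
  constructor
  · -- g normalizes K ⇒ g normalizes H
    intro hg
    have h1 : K ≤ H.map (MulAut.conj g).toMonoidHom := by
      rw [← hg]; exact Subgroup.map_mono hKH
    have h2 : K ≤ H.map (MulAut.conj g).toMonoidHom ⊓ H.map (MulAut.conj (1 : G)).toMonoidHom := by
      rw [hmap1]; exact le_inf h1 hKH
    by_contra hne
    have : H.map (MulAut.conj g).toMonoidHom ⊓ H.map (MulAut.conj (1 : G)).toMonoidHom = ⊥ :=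
      hTI g 1 (by rwa [hmap1])
    exact hK (le_bot_iff.mp (this ▸ h2))
  · -- g normalizes H ⇒ g normalizes K
    intro hg
    have hK' : K.map (MulAut.conj g).toMonoidHom ≤ H := by
      rw [← hg]; exact Subgroup.map_mono hKH
    have hcard : Nat.card (K.map (MulAut.conj g).toMonoidHom) = Nat.card K :=
      Nat.card_congr (Subgroup.equivMapOfInjective K _ (MulAut.conj g).injective).symm.toEquiv
    have hcard' : Nat.card ((K.map (MulAut.conj g).toMonoidHom).subgroupOf H)
        = Nat.card (K.subgroupOf H) := by
      rw [Nat.card_congr (Subgroup.subgroupOfEquivOfLe hK').toEquiv,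
        Nat.card_congr (Subgroup.subgroupOfEquivOfLe hKH).toEquiv, hcard]
    have := aux_cyclic_card_unique hH hcard'
    have h2 : ((K.map (MulAut.conj g).toMonoidHom).subgroupOf H).map H.subtype
        = (K.subgroupOf H).map H.subtype := by rw [this]
    rwa [Subgroup.subgroupOf_map_subtype, Subgroup.subgroupOf_map_subtype,
      inf_of_le_left hK', inf_of_le_left hKH] at h2
end
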